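/- Let S be a commutative ring, A an Azumaya algebra over S, and M a right A-module. Then M is finitely generated projective as a right A-module if and only if M is finitely generated projective as an S-module (via restriction of scalars along S → A). -/

import Mathlib

/-!
STATEMENT 6: Let `S` be a commutative ring, `A` an Azumaya algebra over `S`, and `M` a right
`A`-module (encoded as a left module over `Aᵐᵒᵖ`, with its `S`-module structure obtained by
restriction of scalars along `S → A`, which is encoded by the `IsScalarTower` hypothesis).
Then `M` is finitely generated projective as a right `A`-module if and only if `M` is
finitely generated projective as an `S`-module.
-/

open TensorProduct

section TraceIdeal

variable (S : Type*) [CommRing S] (A : Type*) [AddCommGroup A] [Module S A]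

/-- For a finitely generated projective faithful module over a commutative ring, the trace
ideal is the whole ring: there is a finite family of vectors `y j` and functionals `gg j`
with `∑ j, gg j (y j) = 1`. -/
theorem exists_dual_family (hfin : Module.Finite S A) (hproj : Module.Projective S A)
    (hfaith : FaithfulSMul S A) :
    ∃ (ι : Type) (_ : Fintype ι) (y : ι → A) (gg : ι → (A →ₗ[S] S)),
      ∑ j, gg j (y j) = 1 := by
  obtain ⟨n, f, g, -, -, hfg⟩ := Module.Finite.exists_comp_eq_id_of_projective S A
  set x : Fin n → A := fun j => f (Pi.single j (1 : S)) with hx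
  have hsingle : ∀ v : Fin n → S, ∑ j, v j • (Pi.single j (1 : S) : Fin n → S) = v := by
    intro v; ext i
    simp [Finset.sum_apply, Pi.single_apply]
  have hdual : ∀ a : A, ∑ j, g a j • x j = a := by
    intro a
    have h1 : f (g a) = a := by simpa using LinearMap.congr_fun hfg a
    calc ∑ j, g a j • x j = f (∑ j, g a j • (Pi.single j (1:S) : Fin n → S)) := by
          rw [map_sum]; simp [x]
      _ = a := by rw [hsingle]; exact h1
  set J : Ideal S := Ideal.span (Set.range fun p : Fin n × Fin n => g (x p.1) p.2) with hJ
  have hgen : ∀ p : Fin n × Fin n, g (x p.1) p.2 ∈ J := fun p =>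
    Ideal.subset_span ⟨p, rfl⟩
  have hexp : ∀ (a : A) (j : Fin n), g a j = ∑ i, g a i * g (x i) j := by
    intro a j
    conv_lhs => rw [← hdual a]
    rw [map_sum]
    simp [Finset.sum_apply]
  have hmem : ∀ (a : A) (j : Fin n), g a j ∈ J := by
    intro a j
    rw [hexp a j]
    exact Ideal.sum_mem _ fun i _ => Ideal.mul_mem_left _ _ (hgen (i, j))
  have hfgJ : J.FG := Submodule.fg_span (Set.finite_range _)
  have hle : J ≤ J • J := by
    rw [hJ, Ideal.span_le]
    rintro - ⟨p, rfl⟩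
    show g (x p.1) p.2 ∈ J • J
    rw [hexp (x p.1) p.2]
    exact Submodule.sum_mem _ fun i _ =>
      Submodule.smul_mem_smul (hmem _ _) (hmem _ _)
  obtain ⟨r, hrJ, hr⟩ := Submodule.exists_mem_and_smul_eq_self_of_fg_of_le_smul J J hfgJ hle
  have hone : (1 : S) ∈ J := by
    have h10 : ∀ a : A, (1 - r) • a = (0 : S) • a := by
      intro a
      rw [← hdual a, Finset.smul_sum, zero_smul]
      have hz : ∀ j : Fin n, (1 - r) • (g a j • x j) = (0:S) • x j := by
        intro j
        have hrr := hr _ (hmem a j)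
        simp only [smul_eq_mul] at hrr
        have h0 : (1 - r) * g a j = 0 := by
          rw [sub_mul, one_mul, hrr, sub_self]
        rw [smul_smul, h0]
      simp_rw [hz]
      simp
    have h1r := hfaith.eq_of_smul_eq_smul h10
    have : r = 1 := by linear_combination -h1r
    rwa [← this]
  have hone' : (1 : S) ∈ Submodule.span S
      (Set.range fun p : Fin n × Fin n => g (x p.1) p.2) := hone
  rw [Submodule.mem_span_range_iff_exists_fun] at hone'
  obtain ⟨c, hc⟩ := hone'
  refine ⟨Fin n × Fin n, inferInstance, fun p => x p.1,
    fun p => c p • ((LinearMap.proj p.2).comp g), ?_⟩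
  simpa using hc

end TraceIdeal

variable (S : Type*) [CommRing S] (A : Type*) [Ring A] [Algebra S A]

/-- The natural map `A ⊗[S] Aᵐᵒᵖ → End_S(A)`, `a ⊗ b ↦ (x ↦ a * x * b.unop)`. -/
noncomputable def azumayaMap : A ⊗[S] Aᵐᵒᵖ →ₗ[S] Module.End S A :=
  TensorProduct.lift
    (LinearMap.mk₂ S
      (fun a b => (LinearMap.mulRight S b.unop).comp (LinearMap.mulLeft S a))
      (fun a a' b => by ext x; simp [add_mul])
      (fun s a b => by ext x; simp [smul_mul_assoc])
      (fun a b b' => by ext x; simp [mul_add])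
      (fun s a b => by ext x; simp [mul_smul_comm]))

/-- An Azumaya algebra over a commutative ring `S` is an `S`-algebra `A` that is finitely
generated projective and faithful as an `S`-module and such that the natural map
`A ⊗_S Aᵒᵖ → End_S(A)`, `a ⊗ b ↦ (x ↦ a x b)`, is an isomorphism. -/
structure IsAzumayaAlg : Prop where
  finite : Module.Finite S A
  projective : Module.Projective S A
  faithful : FaithfulSMul S A
  bijective : Function.Bijective (azumayaMap S A)

section AuxLemmas

variable {S A}

@[simp] lemma azumayaMap_tmul (a : A) (b : Aᵐᵒᵖ) (x : A) :
    azumayaMap S A (a ⊗ₜ b) x = a * x * b.unop := rfl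

lemma azumayaMap_mulLeft (c : A) (z : A ⊗[S] Aᵐᵒᵖ) :
    azumayaMap S A ((c ⊗ₜ (1 : Aᵐᵒᵖ)) * z) =
      (LinearMap.mulLeft S c) ∘ₗ azumayaMap S A z := by
  induction z using TensorProduct.induction_on with
  | zero => simp
  | tmul a b =>
      ext x
      simp [Algebra.TensorProduct.tmul_mul_tmul, mul_assoc]
  | add u v hu hv => simp [mul_add, map_add, hu, hv, LinearMap.comp_add]

lemma azumayaMap_mulRight (c : A) (z : A ⊗[S] Aᵐᵒᵖ) :
    azumayaMap S A (((1 : A) ⊗ₜ (MulOpposite.op c)) * z) =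
      (LinearMap.mulRight S c) ∘ₗ azumayaMap S A z := by
  induction z using TensorProduct.induction_on with
  | zero => simp
  | tmul a b =>
      ext x
      simp [Algebra.TensorProduct.tmul_mul_tmul, mul_assoc]
  | add u v hu hv => simp [mul_add, map_add, hu, hv, LinearMap.comp_add]

variable (S A) in
/-- The map `A ⊗[S] Aᵐᵒᵖ → Aᵐᵒᵖ`, `a ⊗ b ↦ b * op a`. -/
noncomputable def kappaMap : A ⊗[S] Aᵐᵒᵖ →ₗ[S] Aᵐᵒᵖ :=
  TensorProduct.lift
    (LinearMap.mk₂ S (fun a b => b * MulOpposite.op a)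
      (fun a a' b => by simp [mul_add])
      (fun s a b => by simp [MulOpposite.op_smul, mul_smul_comm])
      (fun a b b' => by simp [add_mul])
      (fun s a b => by simp [smul_mul_assoc]))

@[simp] lemma kappaMap_tmul (a : A) (b : Aᵐᵒᵖ) :
    kappaMap S A (a ⊗ₜ b) = b * MulOpposite.op a := rfl

lemma kappaMap_eq (z : A ⊗[S] Aᵐᵒᵖ) :
    kappaMap S A z = MulOpposite.op (azumayaMap S A z 1) := by
  induction z using TensorProduct.induction_on with
  | zero => simp
  | tmul a b => simp [MulOpposite.op_mul]
  | add u v hu hv => simp [hu, hv]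

section ModuleM

variable (S A) (M : Type*) [AddCommGroup M] [Module S M] [Module Aᵐᵒᵖ M]
  [IsScalarTower S Aᵐᵒᵖ M]

/-- The map `A ⊗[S] Aᵐᵒᵖ → Hom_S(M, Aᵐᵒᵖ ⊗[S] M)`, `(a ⊗ b) ↦ (m ↦ b ⊗ (op a • m))`. -/
noncomputable def nuMap : (A ⊗[S] Aᵐᵒᵖ) →ₗ[S] M →ₗ[S] Aᵐᵒᵖ ⊗[S] M :=
  TensorProduct.lift
    (LinearMap.mk₂ S
      (fun a b => (TensorProduct.mk S Aᵐᵒᵖ M b).comp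
        (DistribMulAction.toLinearMap S M (MulOpposite.op a)))
      (fun a a' b => by
        ext m
        show b ⊗ₜ[S] ((MulOpposite.op a + MulOpposite.op a') • m) = b ⊗ₜ[S] (MulOpposite.op a • m) + b ⊗ₜ[S] (MulOpposite.op a' • m)
        simp [MulOpposite.op_add, add_smul, tmul_add])
      (fun s a b => by
        ext m
        show b ⊗ₜ[S] ((s • MulOpposite.op a) • m) = s • b ⊗ₜ[S] (MulOpposite.op a • m)
        simp [MulOpposite.op_smul, smul_assoc, tmul_smul])
      (fun a b b' => by ext m; simp [add_tmul])
      (fun s a b => by ext m; simp [smul_tmul']))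

@[simp] lemma nuMap_tmul (a : A) (b : Aᵐᵒᵖ) (m : M) :
    nuMap S A M (a ⊗ₜ b) m = b ⊗ₜ (MulOpposite.op a • m) := rfl

lemma nuMap_smul_arg (c : A) (z : A ⊗[S] Aᵐᵒᵖ) (m : M) :
    nuMap S A M z (MulOpposite.op c • m) = nuMap S A M ((c ⊗ₜ (1:Aᵐᵒᵖ)) * z) m := by
  induction z using TensorProduct.induction_on with
  | zero => simp
  | tmul a b =>
      simp [Algebra.TensorProduct.tmul_mul_tmul, ← mul_smul, ← MulOpposite.op_mul]
  | add u v hu hv => simp [mul_add, hu, hv]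

lemma nuMap_smul_out (c : A) (z : A ⊗[S] Aᵐᵒᵖ) (m : M) :
    MulOpposite.op c • nuMap S A M z m = nuMap S A M (((1:A) ⊗ₜ MulOpposite.op c) * z) m := by
  induction z using TensorProduct.induction_on with
  | zero => simp
  | tmul a b =>
      simp [Algebra.TensorProduct.tmul_mul_tmul, smul_tmul', smul_eq_mul]
  | add u v hu hv => simp [mul_add, hu, hv]

/-- The action map `Aᵐᵒᵖ ⊗[S] M →ₗ[Aᵐᵒᵖ] M`. -/
noncomputable def piMap : Aᵐᵒᵖ ⊗[S] M →ₗ[Aᵐᵒᵖ] M :=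
  TensorProduct.AlgebraTensorModule.lift
    (LinearMap.toSpanSingleton Aᵐᵒᵖ (M →ₗ[S] M) LinearMap.id)

@[simp] lemma piMap_tmul (b : Aᵐᵒᵖ) (m : M) : piMap S A M (b ⊗ₜ m) = b • m := rfl

lemma piMap_nuMap (z : A ⊗[S] Aᵐᵒᵖ) (m : M) :
    piMap S A M (nuMap S A M z m) = kappaMap S A z • m := by
  induction z using TensorProduct.induction_on with
  | zero => simp
  | tmul a b => simp [mul_smul]
  | add u v hu hv => simp [add_smul, hu, hv]

end ModuleM

/-- The key step: over an Azumaya algebra, a module that is projective over the base ring is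
projective over the algebra, via a separability idempotent argument. -/
theorem projective_over_op_of_base (M : Type*) [AddCommGroup M] [Module S M] [Module Aᵐᵒᵖ M]
    [IsScalarTower S Aᵐᵒᵖ M] (hA : IsAzumayaAlg S A) [Module.Projective S M] :
    Module.Projective Aᵐᵒᵖ M := by
  classical
  obtain ⟨ι, _, y, gg, hsum⟩ := exists_dual_family S A hA.finite hA.projective hA.faithful
  set t : A →ₗ[S] S := ∑ j, (gg j).comp (LinearMap.mulLeft S (y j)) with ht
  have ht1 : t 1 = 1 := by
    rw [ht]
    simp only [LinearMap.sum_apply, LinearMap.comp_apply, LinearMap.mulLeft_apply, mul_one]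
    exact hsum
  set θ : Module.End S A := (Algebra.linearMap S A).comp t with hθ
  obtain ⟨e, he⟩ := hA.bijective.surjective θ
  have h2 : ∀ c : A, (c ⊗ₜ (1:Aᵐᵒᵖ)) * e = ((1:A) ⊗ₜ MulOpposite.op c) * e := by
    intro c
    apply hA.bijective.injective
    rw [azumayaMap_mulLeft, azumayaMap_mulRight, he]
    ext x
    simp [hθ, Algebra.commutes]
  have hκ : kappaMap S A e = 1 := by
    rw [kappaMap_eq, he]
    simp [hθ, ht1]
  set σ : M →ₗ[Aᵐᵒᵖ] Aᵐᵒᵖ ⊗[S] M :=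
    { toFun := fun m => nuMap S A M e m
      map_add' := fun m m' => by simp
      map_smul' := fun c m => by
        show nuMap S A M e (c • m) = c • nuMap S A M e m
        rw [← MulOpposite.op_unop c, nuMap_smul_arg, h2, ← nuMap_smul_out] }
    with hσ
  have hsplit : (piMap S A M).comp σ = LinearMap.id := by
    ext m
    simp only [LinearMap.comp_apply, hσ, LinearMap.coe_mk, AddHom.coe_mk, LinearMap.id_apply]
    rw [piMap_nuMap, hκ, one_smul]
  exact Module.Projective.of_split σ (piMap S A M) hsplit

end AuxLemmas

theorem finite_projective_over_azumaya_iff_over_base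
    (hA : IsAzumayaAlg S A) (M : Type*) [AddCommGroup M]
    [Module S M] [Module Aᵐᵒᵖ M] [IsScalarTower S Aᵐᵒᵖ M] :
    (Module.Finite Aᵐᵒᵖ M ∧ Module.Projective Aᵐᵒᵖ M) ↔
      (Module.Finite S M ∧ Module.Projective S M) := by
  constructor
  · rintro ⟨hf, hp⟩
    haveI := hA.finite
    haveI := hA.projective
    haveI : Module.Finite S Aᵐᵒᵖ := Module.Finite.equiv (MulOpposite.opLinearEquiv S)
    haveI : Module.Projective S Aᵐᵒᵖ :=
      Module.Projective.of_equiv (MulOpposite.opLinearEquiv S)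
    refine ⟨Module.Finite.trans Aᵐᵒᵖ M, ?_⟩
    obtain ⟨s, hs⟩ := Module.projective_def'.mp hp
    classical
    haveI : Module.Projective S (M →₀ Aᵐᵒᵖ) :=
      Module.Projective.of_equiv (finsuppLequivDFinsupp S).symm
    exact Module.Projective.of_split (s.restrictScalars S)
      ((Finsupp.linearCombination Aᵐᵒᵖ id).restrictScalars S)
      (by ext m; simpa using LinearMap.congr_fun hs m)
  · rintro ⟨hf, hp⟩
    haveI := hf
    haveI := hp
    exact ⟨Module.Finite.of_restrictScalars_finite S Aᵐᵒᵖ M,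
      projective_over_op_of_base M hA⟩
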